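/- A finitely generated module M with finitely generated socle is supplemented if and only if it is δ-supplemented. -/
import Mathlib


open Submodule

section Defs

universe u v

variable (R : Type u) [Ring R]

/-- A submodule `L` is essential in `M` if it intersects every nonzero submodule nontrivially. -/
def IsEssentialSub {M : Type v} [AddCommGroup M] [Module R M] (L : Submodule R M) : Prop :=
  ∀ K : Submodule R M, K ≠ ⊥ → L ⊓ K ≠ ⊥

/-- A module is singular if it is isomorphic to `N ⧸ L` for some module `N` and
essential submodule `L ≤ N`. -/
def IsSingular (M : Type v) [AddCommGroup M] [Module R M] : Prop :=
  ∃ (N : Type v) (_ : AddCommGroup N) (_ : Module R N) (L : Submodule R N),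
    IsEssentialSub R L ∧ Nonempty ((N ⧸ L) ≃ₗ[R] M)

variable {M : Type v} [AddCommGroup M] [Module R M]

/-- `N` is small in `M`: `N + Z ≠ M` for every proper submodule `Z`. -/
def SmallSub (N : Submodule R M) : Prop :=
  ∀ Z : Submodule R M, Z ≠ ⊤ → N ⊔ Z ≠ ⊤

/-- `N` is δ-small in `M`: `N + Z ≠ M` for every proper submodule `Z` with `M ⧸ Z` singular. -/
def DeltaSmall (N : Submodule R M) : Prop :=
  ∀ Z : Submodule R M, Z ≠ ⊤ → IsSingular R (M ⧸ Z) → N ⊔ Z ≠ ⊤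

/-- `δ(M)`: the sum of all δ-small submodules of `M`. -/
def deltaRad : Submodule R M := sSup {N : Submodule R M | DeltaSmall R N}

/-- The radical: intersection of all maximal submodules. -/
def radM : Submodule R M := sInf {K : Submodule R M | IsCoatom K}

/-- The socle: sum of all simple submodules. -/
def socM : Submodule R M := sSup {S : Submodule R M | IsAtom S}

/-- `N` is a δ-supplement of `K` in `M`: `N + K = M` and `N ∩ K` is δ-small in `N`. -/
def IsDeltaSupplement (N K : Submodule R M) : Prop :=
  N ⊔ K = ⊤ ∧ DeltaSmall R ((N ⊓ K).comap N.subtype)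

/-- `N` is a δ-supplement submodule of `M`. -/
def IsDeltaSupplementSub (N : Submodule R M) : Prop :=
  ∃ K : Submodule R M, IsDeltaSupplement R N K

/-- `N` is a supplement of `K` in `M`: `N + K = M` and `N ∩ K` is small in `N`. -/
def IsSupplement (N K : Submodule R M) : Prop :=
  N ⊔ K = ⊤ ∧ SmallSub R ((N ⊓ K).comap N.subtype)

/-- `M` is δ-supplemented: every submodule has a δ-supplement. -/
def DeltaSupplemented (M : Type v) [AddCommGroup M] [Module R M] : Prop :=
  ∀ L : Submodule R M, ∃ N : Submodule R M, IsDeltaSupplement R N L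

/-- `M` is supplemented: every submodule has a supplement. -/
def Supplemented (M : Type v) [AddCommGroup M] [Module R M] : Prop :=
  ∀ L : Submodule R M, ∃ N : Submodule R M, IsSupplement R N L

/-- `N` is δ-coclosed in `M`: if `X ≤ N`, `N/X` is singular and `N/X ≪_δ M/X`, then `X = N`. -/
def DeltaCoclosed (N : Submodule R M) : Prop :=
  ∀ X : Submodule R M, X ≤ N →
    IsSingular R ↥(N.map X.mkQ) → DeltaSmall R (N.map X.mkQ) → X = N

/-- `N` is coclosed in `M`: if `X ≤ N` and `N/X ≪ M/X`, then `X = N`. -/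
def Coclosed (N : Submodule R M) : Prop :=
  ∀ X : Submodule R M, X ≤ N → SmallSub R (N.map X.mkQ) → X = N

/-- A module is local if it has a largest proper submodule. -/
def LocalModule (M : Type v) [AddCommGroup M] [Module R M] : Prop :=
  ∃ L : Submodule R M, L ≠ ⊤ ∧ ∀ K : Submodule R M, K ≠ ⊤ → K ≤ L

/-- `M` is δ-local if `δ(M)` is δ-small in `M` and `δ(M)` is a maximal submodule. -/
def DeltaLocal (M : Type v) [AddCommGroup M] [Module R M] : Prop :=
  DeltaSmall R (deltaRad R : Submodule R M) ∧ IsCoatom (deltaRad R : Submodule R M)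

end Defs

section Aux

universe u v w

variable {R : Type u} [Ring R]

theorem socM_def {M : Type v} [AddCommGroup M] [Module R M] :
    (socM R : Submodule R M) = sSup {S : Submodule R M | IsAtom S} := rfl

theorem isSingular_congr {A B : Type w} [AddCommGroup A] [Module R A]
    [AddCommGroup B] [Module R B] (h : IsSingular R A) (e : A ≃ₗ[R] B) : IsSingular R B := by
  obtain ⟨N, i1, i2, L, hL, ⟨f⟩⟩ := h
  exact ⟨N, i1, i2, L, hL, ⟨f.trans e⟩⟩

/-- Key step: if `X` is δ-small but `X ⊔ Z₀ = ⊤` with `Z₀` proper, then we can split off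
an atom `Y ≤ X` with complement `K ⊇ Z₀`. -/
theorem step_lemma {W : Type w} [AddCommGroup W] [Module R W]
    {X Z₀ : Submodule R W} (hd : DeltaSmall R X) (hsup : X ⊔ Z₀ = ⊤) (hne : Z₀ ≠ ⊤) :
    ∃ K Y : Submodule R W, Z₀ ≤ K ∧ Y ≤ X ∧ IsAtom Y ∧ K ⊓ Y = ⊥ ∧ K ⊔ Y = ⊤ := by
  have hXZ : ¬ X ≤ Z₀ := fun h => hne (by rw [← hsup, sup_eq_right.2 h])
  obtain ⟨x, hxX, hxZ⟩ := SetLike.not_le_iff_exists.mp hXZ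
  obtain ⟨K, hZ₀K, hKmem, hKmax⟩ :
      ∃ K : Submodule R W, Z₀ ≤ K ∧ x ∉ K ∧ ∀ J : Submodule R W, x ∉ J → K ≤ J → J ≤ K := by
    obtain ⟨K, hK1, hK2⟩ := zorn_le_nonempty₀ {J : Submodule R W | x ∉ J}
      (fun c hc hchain y hy => by
        refine ⟨sSup c, ?_, fun z hz => le_sSup hz⟩
        intro hx
        obtain ⟨p, hpc, hxp⟩ := (Submodule.mem_sSup_of_directed ⟨y, hy⟩
          hchain.directedOn).mp hx
        exact hc hpc hxp) Z₀ hxZ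
    exact ⟨K, hK1, hK2.1, fun J hJ hKJ => hK2.2 hJ hKJ⟩
  have hmemlt : ∀ J : Submodule R W, K < J → x ∈ J := by
    intro J hJ
    by_contra hxJ
    exact hJ.not_ge (hKmax J hxJ hJ.le)
  have hKtop : K ≠ ⊤ := fun h => hKmem (h ▸ mem_top)
  have hXK : X ⊔ K = ⊤ := top_unique (hsup ▸ sup_le_sup_left hZ₀K X)
  have hcoatom : ∀ J : Submodule R W, K < J → J = ⊤ := by
    intro J hJ
    by_contra hJtop
    have hxJ : x ∈ J := hmemlt J hJ
    have hsing : IsSingular R (W ⧸ J) := by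
      refine ⟨W ⧸ K, inferInstance, inferInstance, J.map K.mkQ, ?_,
        ⟨Submodule.quotientQuotientEquivQuotient K J hJ.le⟩⟩
      intro T hT
      have hKT : K < T.comap K.mkQ := by
        refine lt_of_le_of_ne (fun w hw => ?_) ?_
        · have hw0 : K.mkQ w = 0 := (Submodule.Quotient.mk_eq_zero K).mpr hw
          simp only [Submodule.mem_comap, hw0]
          exact T.zero_mem
        · intro h
          apply hT
          rw [← Submodule.map_comap_eq_of_surjective K.mkQ_surjective T, ← h]
          rw [eq_bot_iff]
          rintro t ⟨w, hw, rfl⟩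
          simpa using (Submodule.Quotient.mk_eq_zero K).mpr hw
      have h1 : K.mkQ x ∈ J.map K.mkQ ⊓ T :=
        ⟨Submodule.mem_map_of_mem hxJ, hmemlt _ hKT⟩
      intro h0
      rw [h0, Submodule.mem_bot] at h1
      exact hKmem ((Submodule.Quotient.mk_eq_zero K).mp h1)
    have : X ⊔ J = ⊤ := top_unique (hXK ▸ sup_le_sup_left hJ.le X)
    exact hd J hJtop hsing this
  set P : Submodule R W := Submodule.span R {x} with hP
  have hxP : x ∈ P := Submodule.mem_span_singleton_self x
  have hPX : P ≤ X := (Submodule.span_singleton_le_iff_mem x X).mpr hxX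
  have hPK : ¬ P ≤ K := fun h => hKmem (h hxP)
  have hKP : K ⊔ P = ⊤ := hcoatom _ (left_lt_sup.mpr hPK)
  set E : Submodule R ↥P := K.comap P.subtype with hE
  by_cases hEess : IsEssentialSub R E
  · exfalso
    have hker : LinearMap.ker (K.mkQ ∘ₗ P.subtype) = E := by
      rw [LinearMap.ker_comp, Submodule.ker_mkQ]
    have hsurj : Function.Surjective (K.mkQ ∘ₗ P.subtype) := by
      intro wb
      obtain ⟨w, rfl⟩ := K.mkQ_surjective wb
      have hw : w ∈ P ⊔ K := by rw [sup_comm, hKP]; exact mem_top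
      obtain ⟨a, ha, k, hk, hak⟩ := Submodule.mem_sup.mp hw
      refine ⟨⟨a, ha⟩, ?_⟩
      simp only [LinearMap.comp_apply, Submodule.coe_subtype, Submodule.mkQ_apply]
      rw [← hak]
      exact ((Submodule.Quotient.eq K).mpr (by simpa using neg_mem hk)).symm
    have hsing : IsSingular R (W ⧸ K) :=
      ⟨↥P, inferInstance, inferInstance, E, hEess,
        ⟨(Submodule.quotEquivOfEq _ _ hker.symm).trans
          ((K.mkQ ∘ₗ P.subtype).quotKerEquivOfSurjective hsurj)⟩⟩
    exact hd K hKtop hsing hXK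
  · simp only [IsEssentialSub, not_forall] at hEess
    obtain ⟨B, hB0, hEB⟩ := hEess
    rw [not_not] at hEB
    set Y : Submodule R W := B.map P.subtype with hYdef
    have hYP : Y ≤ P := Submodule.map_subtype_le P B
    have hYX : Y ≤ X := hYP.trans hPX
    have hYK : Y ⊓ K = ⊥ := by
      rw [eq_bot_iff]
      rintro y ⟨hy1, hy2⟩
      obtain ⟨b, hbB, rfl⟩ := hy1
      have hbE : b ∈ E := hy2
      have : b ∈ E ⊓ B := ⟨hbE, hbB⟩
      rw [hEB, Submodule.mem_bot] at this
      simp [this]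
    have hY0 : Y ≠ ⊥ := by
      obtain ⟨b, hbB, hb0⟩ := B.ne_bot_iff.mp hB0
      refine Y.ne_bot_iff.mpr ⟨(b : W), Submodule.mem_map_of_mem hbB, ?_⟩
      simpa using hb0
    have hYnK : ¬ Y ≤ K := by
      intro h
      apply hY0
      rw [← hYK, inf_eq_left.mpr h]
    have hKY : K ⊔ Y = ⊤ := hcoatom _ (left_lt_sup.mpr hYnK)
    have hatom : IsAtom Y := by
      constructor
      · exact hY0
      · intro Y' hY'
        by_contra hY'0
        have hY'nK : ¬ Y' ≤ K := by
          intro h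
          apply hY'0
          have : Y' ≤ Y ⊓ K := le_inf hY'.le h
          rwa [hYK, le_bot_iff] at this
        have htop : Y' ⊔ K = ⊤ := by
          rw [sup_comm]; exact hcoatom _ (left_lt_sup.mpr hY'nK)
        have h1 : (Y' ⊔ K) ⊓ Y = Y' ⊔ K ⊓ Y := sup_inf_assoc_of_le _ hY'.le
        rw [htop, top_inf_eq, inf_comm, hYK, sup_bot_eq] at h1
        exact hY'.ne' h1
    exact ⟨K, Y, hZ₀K, hYX, hatom, by rw [inf_comm, hYK], hKY⟩

theorem deltaSmall_map_equiv {W₁ : Type w} {W₂ : Type w} [AddCommGroup W₁] [Module R W₁]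
    [AddCommGroup W₂] [Module R W₂] (e : W₁ ≃ₗ[R] W₂) {A : Submodule R W₁}
    (h : DeltaSmall R A) : DeltaSmall R (A.map (e : W₁ →ₗ[R] W₂)) := by
  intro Z₂ hZ₂ hsing hsup
  have hmapcomap : (Z₂.comap (e : W₁ →ₗ[R] W₂)).map (e : W₁ →ₗ[R] W₂) = Z₂ := by
    rw [Submodule.map_comap_eq, LinearEquiv.range, top_inf_eq]
  have hZ₁ : Z₂.comap (e : W₁ →ₗ[R] W₂) ≠ ⊤ := by
    intro h'
    apply hZ₂
    rw [← hmapcomap, h', Submodule.map_top, LinearEquiv.range]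
  have heq : (W₁ ⧸ Z₂.comap (e : W₁ →ₗ[R] W₂)) ≃ₗ[R] W₂ ⧸ Z₂ :=
    Submodule.Quotient.equiv _ _ e hmapcomap
  have hsing₁ : IsSingular R (W₁ ⧸ Z₂.comap (e : W₁ →ₗ[R] W₂)) :=
    isSingular_congr hsing heq.symm
  have hsup₁ : A ⊔ Z₂.comap (e : W₁ →ₗ[R] W₂) = ⊤ := by
    apply Submodule.map_injective_of_injective (f := (e : W₁ →ₗ[R] W₂)) e.injective
    rw [Submodule.map_sup, hmapcomap, hsup, Submodule.map_top, LinearEquiv.range]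
  exact h _ hZ₁ hsing₁ hsup₁

theorem map_equivMapOfInjective_comap {M : Type v} [AddCommGroup M] [Module R M]
    (N : Submodule R M) {A B : Submodule R ↥N} (hAB : A ≤ B) :
    (A.comap B.subtype).map
        ((Submodule.equivMapOfInjective N.subtype N.injective_subtype B :
          ↥B →ₗ[R] ↥(B.map N.subtype))) =
      (A.map N.subtype).comap (B.map N.subtype).subtype := by
  ext y
  constructor
  · rintro ⟨x, hx, rfl⟩
    exact ⟨(x : ↥N), hx, by
      simp [Submodule.coe_equivMapOfInjective_apply]⟩
  · rintro ⟨a, haA, ha⟩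
    exact ⟨⟨a, hAB haA⟩, haA, Subtype.ext ha⟩

theorem projDS {W : Type w} [AddCommGroup W] [Module R W] {X K Y : Submodule R W}
    (hKY : K ⊓ Y = ⊥) (hKYt : K ⊔ Y = ⊤) (hd : DeltaSmall R X) :
    DeltaSmall R ((X ⊓ K).comap K.subtype) := by
  intro Z' hZ' hsing hsup'
  set Z : Submodule R W := Z'.map K.subtype with hZdef
  have hZK : Z ≤ K := Submodule.map_subtype_le _ _
  have hcomapZ : Z.comap K.subtype = Z' :=
    Submodule.comap_map_eq_of_injective K.injective_subtype Z'
  have hZne : Z ≠ K := by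
    intro h
    apply hZ'
    rw [← hcomapZ, h, Submodule.comap_subtype_self]
  have hXZK : (X ⊓ K) ⊔ Z = K := by
    have h := congrArg (Submodule.map K.subtype) hsup'
    rw [Submodule.map_sup, Submodule.map_comap_subtype, Submodule.map_top,
      Submodule.range_subtype] at h
    rwa [(inf_eq_right.mpr inf_le_right : K ⊓ (X ⊓ K) = X ⊓ K)] at h
  have hYK : Y ⊓ K = ⊥ := by rw [inf_comm]; exact hKY
  have hZYK : (Z ⊔ Y) ⊓ K = Z := by
    rw [sup_inf_assoc_of_le _ hZK, hYK, sup_bot_eq]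
  have hZ''top : Z ⊔ Y ≠ ⊤ := by
    intro h
    apply hZne
    rw [← hZYK, h, top_inf_eq]
  have hker : LinearMap.ker ((Z ⊔ Y).mkQ ∘ₗ K.subtype) = Z' := by
    rw [LinearMap.ker_comp, Submodule.ker_mkQ, ← hcomapZ]
    ext t
    simp only [Submodule.mem_comap, Submodule.coe_subtype]
    constructor
    · intro ht
      have : (t : W) ∈ (Z ⊔ Y) ⊓ K := ⟨ht, t.2⟩
      rwa [hZYK] at this
    · intro ht
      exact le_sup_left (α := Submodule R W) ht
  have hsurj : Function.Surjective ((Z ⊔ Y).mkQ ∘ₗ K.subtype) := by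
    intro wb
    obtain ⟨w, rfl⟩ := (Z ⊔ Y).mkQ_surjective wb
    have hw : w ∈ K ⊔ (Z ⊔ Y) := by
      have : K ⊔ Y ≤ K ⊔ (Z ⊔ Y) := sup_le_sup_left le_sup_right K
      rw [hKYt] at this
      exact this mem_top
    obtain ⟨k, hk, u, hu, hku⟩ := Submodule.mem_sup.mp hw
    refine ⟨⟨k, hk⟩, ?_⟩
    simp only [LinearMap.comp_apply, Submodule.coe_subtype, Submodule.mkQ_apply]
    rw [← hku]
    exact ((Submodule.Quotient.eq _).mpr (by simpa using neg_mem hu)).symm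
  have heq : (↥K ⧸ Z') ≃ₗ[R] W ⧸ (Z ⊔ Y) :=
    (Submodule.quotEquivOfEq _ _ hker.symm).trans
      (((Z ⊔ Y).mkQ ∘ₗ K.subtype).quotKerEquivOfSurjective hsurj)
  have hsing'' : IsSingular R (W ⧸ (Z ⊔ Y)) := isSingular_congr hsing heq
  apply hd (Z ⊔ Y) hZ''top hsing''
  apply top_unique
  calc ⊤ = K ⊔ Y := hKYt.symm
    _ = ((X ⊓ K) ⊔ Z) ⊔ Y := by rw [hXZK]
    _ ≤ X ⊔ (Z ⊔ Y) := by
        rw [sup_assoc]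
        exact sup_le_sup_right inf_le_left _

theorem isAtom_map_subtype {M : Type v} [AddCommGroup M] [Module R M]
    (N : Submodule R M) {m : Submodule R ↥N} (hm : IsAtom m) : IsAtom (m.map N.subtype) := by
  have hinj := N.injective_subtype
  constructor
  · intro h
    exact hm.1 (Submodule.map_injective_of_injective hinj (by rw [h, Submodule.map_bot]))
  · intro B hB
    have hBN : B ≤ N := hB.le.trans (Submodule.map_subtype_le _ _)
    have hBmap : (B.comap N.subtype).map N.subtype = B := by
      rw [Submodule.map_comap_subtype, inf_eq_right.mpr hBN]
    have h1 : B.comap N.subtype < m := by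
      refine lt_of_le_of_ne ?_ ?_
      · rw [← Submodule.map_le_map_iff_of_injective hinj, hBmap]
        exact hB.le
      · intro h
        exact hB.ne (by rw [← hBmap, h])
    rw [← hBmap, hm.2 _ h1, Submodule.map_bot]

theorem isAtom_comap_subtype {M : Type v} [AddCommGroup M] [Module R M]
    (S : Submodule R M) {T : Submodule R M} (hT : IsAtom T) (hTS : T ≤ S) :
    IsAtom (T.comap S.subtype) := by
  have hinj := S.injective_subtype
  have hmap : (T.comap S.subtype).map S.subtype = T := by
    rw [Submodule.map_comap_subtype, inf_eq_right.mpr hTS]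
  constructor
  · intro h
    exact hT.1 (by rw [← hmap, h, Submodule.map_bot])
  · intro B hB
    have h1 : B.map S.subtype < T := by
      refine lt_of_le_of_ne ?_ ?_
      · rw [← hmap]; exact Submodule.map_mono hB.le
      · intro h
        exact hB.ne (Submodule.map_injective_of_injective hinj (by rw [h, hmap]))
    have h2 := hT.2 _ h1
    exact Submodule.map_injective_of_injective hinj (by rw [h2, Submodule.map_bot])


theorem socM_isSemisimple {M : Type v} [AddCommGroup M] [Module R M] :
    IsSemisimpleModule R ↥(socM R : Submodule R M) := by
  apply IsSemisimpleModule.of_sSup_simples_eq_top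
  apply Submodule.map_injective_of_injective (socM R : Submodule R M).injective_subtype
  rw [(Submodule.gc_map_comap (socM R : Submodule R M).subtype).l_sSup, Submodule.map_top,
    Submodule.range_subtype]
  apply le_antisymm
  · exact iSup₂_le fun m hm => Submodule.map_subtype_le _ _
  · conv_lhs => rw [socM_def]
    refine sSup_le fun T hT => ?_
    have hTS : T ≤ (socM R : Submodule R M) := by rw [socM_def]; exact le_sSup hT
    have hat := isAtom_comap_subtype (socM R) hT hTS
    have hmapT : (T.comap (socM R : Submodule R M).subtype).map
        (socM R : Submodule R M).subtype = T := by
      rw [Submodule.map_comap_subtype, inf_eq_right.mpr hTS]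
    exact le_iSup₂_of_le (T.comap (socM R : Submodule R M).subtype)
      (isSimpleModule_iff_isAtom.mpr hat) hmapT.ge

theorem main_aux {M : Type v} [AddCommGroup M] [Module R M]
    (hnoeth : IsNoetherian R ↥(socM R : Submodule R M)) (L : Submodule R M)
    (C : Submodule R ↥(socM R : Submodule R M)) :
    ∀ N : Submodule R M,
      (C.map (socM R : Submodule R M).subtype) ⊓ N = ⊥ → N ⊔ L = ⊤ →
      DeltaSmall R ((N ⊓ L).comap N.subtype) → ∃ N', IsSupplement R N' L := by
  haveI := hnoeth
  induction C using IsNoetherian.induction with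
  | hgt C ih =>
    intro N hCN hNL hd
    by_cases hsmall : SmallSub R ((N ⊓ L).comap N.subtype)
    · exact ⟨N, hNL, hsmall⟩
    · rw [SmallSub] at hsmall
      push_neg at hsmall
      obtain ⟨Z', hZ'ne, hZ'sup⟩ := hsmall
      obtain ⟨Kw, Yw, hZK, hYX, hatom, hKYbot, hKYtop⟩ := step_lemma hd hZ'sup hZ'ne
      have hinj := N.injective_subtype
      set K : Submodule R M := Kw.map N.subtype with hKdef
      set Y : Submodule R M := Yw.map N.subtype with hYdef
      have hKN : K ≤ N := Submodule.map_subtype_le _ _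
      have hYN : Y ≤ N := Submodule.map_subtype_le _ _
      have hYatom : IsAtom Y := isAtom_map_subtype N hatom
      have hYS : Y ≤ (socM R : Submodule R M) := by
        rw [socM_def]; exact le_sSup hYatom
      have hYL : Y ≤ L := by
        have h1 : Y ≤ ((N ⊓ L).comap N.subtype).map N.subtype := Submodule.map_mono hYX
        rw [Submodule.map_comap_subtype] at h1
        exact h1.trans (inf_le_right.trans inf_le_right)
      have hKY : K ⊓ Y = ⊥ := by
        rw [← Submodule.map_inf _ hinj, hKYbot, Submodule.map_bot]
      have hKYN : K ⊔ Y = N := by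
        rw [← Submodule.map_sup, hKYtop, Submodule.map_top, Submodule.range_subtype]
      have hKL : K ⊔ L = ⊤ := by
        rw [← hNL, ← hKYN, sup_assoc, sup_eq_right.mpr hYL]
      have hYnotC : ¬ Y ≤ C.map (socM R : Submodule R M).subtype := by
        intro h
        exact hYatom.1 (le_bot_iff.mp (hCN ▸ le_inf h hYN))
      have hYw' : (Y.comap (socM R : Submodule R M).subtype).map
          (socM R : Submodule R M).subtype = Y := by
        rw [Submodule.map_comap_subtype, inf_eq_right.mpr hYS]
      have hCC' : C < C ⊔ Y.comap (socM R : Submodule R M).subtype := by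
        refine lt_of_le_of_ne le_sup_left ?_
        intro h
        apply hYnotC
        rw [← hYw']
        exact Submodule.map_mono (h ▸ le_sup_right)
      have hC'K : (C ⊔ Y.comap (socM R : Submodule R M).subtype).map
          (socM R : Submodule R M).subtype ⊓ K = ⊥ := by
        rw [Submodule.map_sup, hYw']
        have h2 : (C.map (socM R : Submodule R M).subtype ⊔ Y) ⊓ N = Y := by
          rw [sup_comm (C.map (socM R : Submodule R M).subtype) Y,
            sup_inf_assoc_of_le _ hYN, hCN, sup_bot_eq]
        rw [← inf_eq_right.mpr hKN, ← inf_assoc, h2, inf_comm Y K, hKY]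
      have h1 : DeltaSmall R ((((N ⊓ L).comap N.subtype) ⊓ Kw).comap Kw.subtype) :=
        projDS hKYbot hKYtop hd
      have h2 := deltaSmall_map_equiv
        (Submodule.equivMapOfInjective N.subtype N.injective_subtype Kw) h1
      rw [map_equivMapOfInjective_comap N inf_le_right] at h2
      have h3 : (((N ⊓ L).comap N.subtype) ⊓ Kw).map N.subtype = K ⊓ L := by
        rw [Submodule.map_inf _ hinj, Submodule.map_comap_subtype,
          inf_eq_right.mpr (inf_le_left : N ⊓ L ≤ N), inf_comm (N ⊓ L) K, ← inf_assoc,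
          inf_eq_left.mpr hKN]
      rw [h3] at h2
      exact ih _ hCC' K hC'K hKL h2

end Aux
theorem supplemented_iff_deltaSupplemented {R : Type*} [Ring R] (M : Type*) [AddCommGroup M]
    [Module R M] [Module.Finite R M] (hsoc : (socM R : Submodule R M).FG) :
    Supplemented R M ↔ DeltaSupplemented R M := by
  constructor
  · intro h L
    obtain ⟨N, h1, h2⟩ := h L
    exact ⟨N, h1, fun Z hZ _ => h2 Z hZ⟩
  · intro h L
    haveI : Module.Finite R ↥(socM R : Submodule R M) := Module.Finite.iff_fg.mpr hsoc
    haveI : IsSemisimpleModule R ↥(socM R : Submodule R M) := socM_isSemisimple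
    have hnoeth : IsNoetherian R ↥(socM R : Submodule R M) := inferInstance
    obtain ⟨N, h1, h2⟩ := h L
    refine main_aux hnoeth L ⊥ N ?_ h1 h2
    rw [Submodule.map_bot, bot_inf_eq]
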